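/- For every positive integer n, the number of nonzero decimal digits of 2^n is strictly greater than log₄ n. -/

import Mathlib

lemma key_lemma : ∀ M : ℕ, M ≠ 0 → M % 10 ≠ 0 →
    ∀ v : ℕ, 2 ^ v ∣ M → v < 4 ^ ((Nat.digits 10 M).filter (· ≠ 0)).length := by
  intro M
  induction M using Nat.strong_induction_on with
  | _ M IH =>
    intro hM0 hM10 v hv
    rcases lt_or_ge M 10 with hlt | hge
    · -- single digit case
      have hd : Nat.digits 10 M = [M] := by
        rw [Nat.digits_def' (by norm_num : 1 < 10) (Nat.pos_of_ne_zero hM0)]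
        simp [Nat.div_eq_of_lt hlt, Nat.mod_eq_of_lt hlt]
      have hk : ((Nat.digits 10 M).filter (· ≠ 0)).length = 1 := by
        rw [hd]; simp [List.filter, hM0]
      rw [hk]
      have h2 : 2 ^ v ≤ M := Nat.le_of_dvd (Nat.pos_of_ne_zero hM0) hv
      have : (2:ℕ) ^ v < 2 ^ 4 := by omega
      have := Nat.pow_lt_pow_iff_right (a := 2) (by norm_num) |>.mp this
      omega
    · set a := Nat.log 10 M with ha
      have ha1 : 1 ≤ a := Nat.le_log_of_pow_le (by norm_num) (by simpa using hge)
      set e := M / 10 ^ a with he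
      set M₀ := M % 10 ^ a with hM₀def
      have hpow_le : 10 ^ a ≤ M := Nat.pow_log_le_self 10 hM0
      have hMlt : M < 10 ^ (a + 1) := Nat.lt_pow_succ_log_self (by norm_num) M
      have he0 : e ≠ 0 := by
        simp only [he]
        exact Nat.div_ne_zero_iff.mpr ⟨by positivity, hpow_le⟩
      have he10 : e < 10 := by
        rw [he, Nat.div_lt_iff_lt_mul (by positivity)]
        calc M < 10 ^ (a+1) := hMlt
        _ = 10 ^ a * 10 := by ring
        _ = 10 * 10 ^ a := by ring
      have hsplit : M₀ + 10 ^ a * e = M := Nat.mod_add_div _ _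
      have hM₀0 : M₀ ≠ 0 := by
        intro h
        apply hM10
        have : M = 10 ^ a * e := by omega
        have : (10:ℕ) ∣ M := this ▸ Dvd.dvd.mul_right (dvd_pow_self 10 (by omega)) e
        omega
      have hM₀lt : M₀ < 10 ^ a := Nat.mod_lt _ (by positivity)
      have hM₀ltM : M₀ < M := lt_of_lt_of_le hM₀lt hpow_le
      have hM₀10 : M₀ % 10 ≠ 0 := by
        have : M % 10 = M₀ % 10 := by
          conv_lhs => rw [← hsplit]
          obtain ⟨b, hb⟩ : (10:ℕ) ∣ 10 ^ a := dvd_pow_self 10 (by omega)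
          rw [hb]
          ring_nf
          omega
        omega
      -- digit length of M₀
      have hL₀ : (Nat.digits 10 M₀).length ≤ a := by
        have := Nat.log_lt_iff_lt_pow (by norm_num : 1 < 10) hM₀0 |>.mpr hM₀lt
        rw [Nat.digits_len 10 M₀ (by norm_num) hM₀0]
        omega
      have hdig : Nat.digits 10 M =
          Nat.digits 10 M₀ ++ List.replicate (a - (Nat.digits 10 M₀).length) 0
            ++ Nat.digits 10 e := by
        rw [Nat.digits_append_zeroes_append_digits (by norm_num) (Nat.pos_of_ne_zero he0)]
        congr 1
        rw [Nat.add_sub_cancel' hL₀]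
        omega
      have hde : Nat.digits 10 e = [e] := by
        rw [Nat.digits_def' (by norm_num : 1 < 10) (Nat.pos_of_ne_zero he0)]
        simp [Nat.div_eq_of_lt he10, Nat.mod_eq_of_lt he10]
      have hk : ((Nat.digits 10 M).filter (· ≠ 0)).length
          = ((Nat.digits 10 M₀).filter (· ≠ 0)).length + 1 := by
        rw [hdig, List.filter_append, List.filter_append, hde]
        simp [List.filter_replicate, he0]
      -- divisibility of M₀ by 2 ^ min v a
      have hdvd₀ : 2 ^ (min v a) ∣ M₀ := by
        have h1 : 2 ^ (min v a) ∣ M := dvd_trans (pow_dvd_pow 2 (min_le_left _ _)) hv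
        have h2 : 2 ^ (min v a) ∣ 10 ^ a * e := by
          apply Dvd.dvd.mul_right
          exact dvd_trans (pow_dvd_pow 2 (min_le_right _ _))
            (pow_dvd_pow_of_dvd (by norm_num) a)
        have : M₀ = M - 10 ^ a * e := by omega
        rw [this]
        exact Nat.dvd_sub h1 h2
      have hIH := IH M₀ hM₀ltM hM₀0 hM₀10 (min v a) hdvd₀
      rw [hk]
      rcases le_or_gt v a with hva | hva
      · rw [min_eq_left hva] at hIH
        calc v < 4 ^ ((Nat.digits 10 M₀).filter (· ≠ 0)).length := hIH
        _ ≤ 4 ^ (((Nat.digits 10 M₀).filter (· ≠ 0)).length + 1) :=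
            Nat.pow_le_pow_right (by norm_num) (by omega)
      · rw [min_eq_right hva.le] at hIH
        have h2v : 2 ^ v ≤ M := Nat.le_of_dvd (Nat.pos_of_ne_zero hM0) hv
        have h16 : (10:ℕ) ^ (a+1) ≤ 16 ^ (a+1) := Nat.pow_le_pow_left (by norm_num) _
        have h2v4 : (2:ℕ) ^ v < 2 ^ (4 * (a+1)) := by
          calc (2:ℕ) ^ v ≤ M := h2v
          _ < 10 ^ (a+1) := hMlt
          _ ≤ 16 ^ (a+1) := h16
          _ = 2 ^ (4 * (a+1)) := by rw [pow_mul]; norm_num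
        have hv4 : v < 4 * (a + 1) := by
          exact Nat.pow_lt_pow_iff_right (a := 2) (by norm_num) |>.mp h2v4
        calc v < 4 * (a + 1) := hv4
        _ ≤ 4 * 4 ^ ((Nat.digits 10 M₀).filter (· ≠ 0)).length := by omega
        _ = 4 ^ (((Nat.digits 10 M₀).filter (· ≠ 0)).length + 1) := by ring

theorem stmt11 (n : ℕ) (hn : 0 < n) :
    Real.logb 4 n < (((Nat.digits 10 (2 ^ n)).filter (· ≠ 0)).length : ℝ) := by
  have hM0 : (2:ℕ) ^ n ≠ 0 := by positivity
  have hM10 : (2:ℕ) ^ n % 10 ≠ 0 := by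
    intro h
    have h5 : (5:ℕ) ∣ 2 ^ n := dvd_trans (by norm_num) (Nat.dvd_of_mod_eq_zero h)
    have := Nat.Prime.dvd_of_dvd_pow (p := 5) (by norm_num) h5
    norm_num at this
  have hkey := key_lemma (2 ^ n) hM0 hM10 n dvd_rfl
  set k := ((Nat.digits 10 (2 ^ n)).filter (· ≠ 0)).length with hk
  have h1 : (n:ℝ) < (4:ℝ) ^ k := by
    calc (n:ℝ) < ((4 ^ k : ℕ) : ℝ) := by exact_mod_cast hkey
    _ = (4:ℝ) ^ k := by push_cast; ring
  calc Real.logb 4 n < Real.logb 4 ((4:ℝ) ^ k) :=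
      Real.logb_lt_logb (by norm_num) (by exact_mod_cast hn) h1
  _ = k := by
      rw [Real.logb_pow]
      have : Real.logb 4 4 = 1 := Real.logb_self_eq_one (by norm_num)
      simp [this]
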